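/- Let (X, F) be a measurable space and μ : F → [0,∞] a submodular monotone measure. Let p > 1 and q satisfy 1/p + 1/q = 1, let A ∈ F, and let f, g, h : X → [0,∞) be measurable functions. Set a = (C)∫_A g f^p dμ and b = (C)∫_A h f^p dμ, and assume 0 < a < ∞ and 0 < b < ∞. Then (C)∫_A f dμ ≤ 2^{1/p} · (ab)^{1/p} · ((C)∫_A (b·g + a·h)^{−(q−1)} dμ)^{1/q}, where (b·g + a·h)^{−(q−1)} denotes the function x ↦ 1/(b·g(x) + a·h(x))^{q−1} (with value ∞ where b·g(x) + a·h(x) = 0). -/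

import Mathlib

open scoped ENNReal NNReal

/-- The Choquet integral of `k` on `A` with respect to the monotone set
function `μ`: `(C)∫_A k dμ = ∫_0^∞ μ(A ∩ {k ≥ t}) dt`. -/
noncomputable def choquet {X : Type*} (μ : Set X → ℝ≥0∞) (f : X → ℝ≥0∞)
    (A : Set X) : ℝ≥0∞ :=
  ∫⁻ t in Set.Ioi (0:ℝ), μ (A ∩ {x | ENNReal.ofReal t ≤ f x})

open MeasureTheory Set

lemma lintegral_translate (Ψ : ℝ → ℝ≥0∞) (c : ℝ) {s : Set ℝ}
    (hs : MeasurableSet s) :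
    ∫⁻ t in s, Ψ t = ∫⁻ t in (fun t => t + c) ⁻¹' s, Ψ (t + c) := by
  rw [← lintegral_indicator hs,
    ← lintegral_indicator ((measurable_add_const c) hs) (fun t => Ψ (t + c))]
  rw [← lintegral_add_right_eq_self (fun t => s.indicator Ψ t) c]
  refine lintegral_congr fun t => ?_
  by_cases h : t + c ∈ s <;> simp [Set.indicator, h, Set.mem_preimage]

lemma lintegral_scale (Ψ : ℝ → ℝ≥0∞) (hΨ : Measurable Ψ) (a : ℝ) (ha : 0 < a) :
    ∫⁻ t in Set.Ioi (0:ℝ), Ψ (a * t) = ENNReal.ofReal a⁻¹ * ∫⁻ t in Set.Ioi (0:ℝ), Ψ t := by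
  have hmeas : Measurable ((Set.Ioi (0:ℝ)).indicator Ψ) :=
    hΨ.indicator measurableSet_Ioi
  have h1 : ∫⁻ t in Set.Ioi (0:ℝ), Ψ (a * t)
      = ∫⁻ t, ((Set.Ioi (0:ℝ)).indicator Ψ) (a * t) := by
    rw [← lintegral_indicator measurableSet_Ioi]
    refine lintegral_congr fun t => ?_
    by_cases h : t ∈ Set.Ioi (0:ℝ)
    · have h2 : a * t ∈ Set.Ioi (0:ℝ) := by
        simp only [Set.mem_Ioi] at *; positivity
      simp [Set.indicator, h, h2]
    · have h2 : a * t ∉ Set.Ioi (0:ℝ) := by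
        simp only [Set.mem_Ioi, not_lt] at *
        exact mul_nonpos_of_nonneg_of_nonpos ha.le h
      simp [Set.indicator, h, h2]
  rw [h1, ← lintegral_map hmeas (measurable_const_mul a),
    Real.map_volume_mul_left (ne_of_gt ha), lintegral_smul_measure,
    abs_of_pos (inv_pos.mpr ha), lintegral_indicator measurableSet_Ioi, smul_eq_mul]

lemma sup_Ioc (Ψ : ℝ → ℝ≥0∞) (hΨ : Measurable Ψ) :
    ∫⁻ t in Set.Ioi (0:ℝ), Ψ t = ⨆ n : ℕ, ∫⁻ t in Set.Ioc (0:ℝ) n, Ψ t := by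
  set F : ℕ → ℝ → ℝ≥0∞ := fun n => (Set.Ioc (0:ℝ) n).indicator Ψ with hF
  have hmono : Monotone F := by
    intro m n hmn t
    simp only [hF]
    by_cases h : t ∈ Set.Ioc (0:ℝ) m
    · have hmem : t ∈ Set.Ioc (0:ℝ) (n:ℝ) := ⟨h.1, h.2.trans (by exact_mod_cast hmn)⟩
      rw [Set.indicator_of_mem h]
      exact (Set.indicator_of_mem hmem Ψ).ge
    · rw [Set.indicator_of_notMem h]; positivity
  have hpt : ∀ t, (⨆ n, F n t) = (Set.Ioi (0:ℝ)).indicator Ψ t := by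
    intro t
    by_cases ht : t ∈ Set.Ioi (0:ℝ)
    · rw [Set.indicator_of_mem ht]
      obtain ⟨n, hn⟩ := exists_nat_ge t
      apply le_antisymm
      · exact iSup_le fun m => Set.indicator_le_self _ _ t
      · have hmem : t ∈ Set.Ioc (0:ℝ) (n:ℝ) := ⟨ht, hn⟩
        exact le_iSup_of_le n (Set.indicator_of_mem hmem Ψ).ge
    · rw [Set.indicator_of_notMem ht]
      simp only [Set.mem_Ioi, not_lt] at ht
      refine le_antisymm (iSup_le fun n => le_of_eq ?_) (zero_le)
      exact Set.indicator_of_notMem (fun h => absurd h.1 (not_lt.mpr ht)) Ψ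
  calc ∫⁻ t in Set.Ioi (0:ℝ), Ψ t = ∫⁻ t, (Set.Ioi (0:ℝ)).indicator Ψ t :=
        (lintegral_indicator measurableSet_Ioi Ψ).symm
    _ = ∫⁻ t, ⨆ n, F n t := by refine lintegral_congr fun t => (hpt t).symm
    _ = ⨆ n, ∫⁻ t, F n t :=
        lintegral_iSup (fun n => hΨ.indicator measurableSet_Ioc) hmono
    _ = ⨆ n : ℕ, ∫⁻ t in Set.Ioc (0:ℝ) n, Ψ t := by
        refine iSup_congr fun n => lintegral_indicator measurableSet_Ioc Ψ


section Choquet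

variable {X : Type*} [MeasurableSpace X]

lemma lv_meas {k : X → ℝ≥0∞} (hk : Measurable k) {A : Set X} (hA : MeasurableSet A)
    (t : ℝ) : MeasurableSet (A ∩ {x | ENNReal.ofReal t ≤ k x}) :=
  hA.inter (hk measurableSet_Ici)

lemma dist_antitone (μ : Set X → ℝ≥0∞)
    (hμmono : ∀ A B : Set X, MeasurableSet A → MeasurableSet B → A ⊆ B → μ A ≤ μ B)
    {A : Set X} (hA : MeasurableSet A) {k : X → ℝ≥0∞} (hk : Measurable k) :
    Antitone (fun t => μ (A ∩ {x | ENNReal.ofReal t ≤ k x})) := by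
  intro s t hst
  refine hμmono _ _ (lv_meas hk hA t) (lv_meas hk hA s) ?_
  exact Set.inter_subset_inter_right A fun x hx =>
    le_trans (ENNReal.ofReal_le_ofReal hst) hx

lemma dist_meas (μ : Set X → ℝ≥0∞)
    (hμmono : ∀ A B : Set X, MeasurableSet A → MeasurableSet B → A ⊆ B → μ A ≤ μ B)
    {A : Set X} (hA : MeasurableSet A) {k : X → ℝ≥0∞} (hk : Measurable k) :
    Measurable (fun t => μ (A ∩ {x | ENNReal.ofReal t ≤ k x})) :=
  (dist_antitone μ hμmono hA hk).measurable

lemma choquet_mono (μ : Set X → ℝ≥0∞)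
    (hμmono : ∀ A B : Set X, MeasurableSet A → MeasurableSet B → A ⊆ B → μ A ≤ μ B)
    {A : Set X} (hA : MeasurableSet A) {k₁ k₂ : X → ℝ≥0∞}
    (hk₁ : Measurable k₁) (hk₂ : Measurable k₂)
    (hle : ∀ x, k₁ x ≤ k₂ x) : choquet μ k₁ A ≤ choquet μ k₂ A := by
  refine lintegral_mono fun t => ?_
  refine hμmono _ _ (lv_meas hk₁ hA t) (lv_meas hk₂ hA t) ?_
  exact Set.inter_subset_inter_right A fun x hx => le_trans hx (hle x)

lemma choquet_smul (μ : Set X → ℝ≥0∞)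
    (hμmono : ∀ A B : Set X, MeasurableSet A → MeasurableSet B → A ⊆ B → μ A ≤ μ B)
    {A : Set X} (hA : MeasurableSet A) {k : X → ℝ≥0∞} (hk : Measurable k)
    {c : ℝ≥0∞} (hc0 : c ≠ 0) (hcf : c ≠ ∞) :
    choquet μ (fun x => c * k x) A = c * choquet μ k A := by
  have hcr : 0 < c.toReal := ENNReal.toReal_pos hc0 hcf
  have hset : ∀ t : ℝ, (A ∩ {x | ENNReal.ofReal t ≤ c * k x})
      = A ∩ {x | ENNReal.ofReal (c.toReal⁻¹ * t) ≤ k x} := by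
    intro t
    congr 1
    ext x
    simp only [Set.mem_setOf_eq]
    rw [ENNReal.ofReal_mul (le_of_lt (inv_pos.mpr hcr)),
      ENNReal.ofReal_inv_of_pos hcr, ENNReal.ofReal_toReal hcf]
    rw [← ENNReal.div_eq_inv_mul, ENNReal.div_le_iff_le_mul (Or.inl hc0) (Or.inl hcf),
      mul_comm]
  have h1 : choquet μ (fun x => c * k x) A
      = ∫⁻ t in Set.Ioi (0:ℝ), μ (A ∩ {x | ENNReal.ofReal (c.toReal⁻¹ * t) ≤ k x}) := by
    unfold choquet
    refine lintegral_congr fun t => by rw [hset t]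
  rw [h1, lintegral_scale _ (dist_meas μ hμmono hA hk) _ (inv_pos.mpr hcr)]
  rw [inv_inv, ENNReal.ofReal_toReal hcf]
  rfl

lemma choquet_chebyshev (μ : Set X → ℝ≥0∞)
    (hμmono : ∀ A B : Set X, MeasurableSet A → MeasurableSet B → A ⊆ B → μ A ≤ μ B)
    {A : Set X} (hA : MeasurableSet A) {k : X → ℝ≥0∞} (hk : Measurable k)
    {s : ℝ} (hs : 0 < s) :
    ENNReal.ofReal s * μ (A ∩ {x | ENNReal.ofReal s ≤ k x}) ≤ choquet μ k A := by
  have h1 : ENNReal.ofReal s * μ (A ∩ {x | ENNReal.ofReal s ≤ k x})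
      = ∫⁻ _ in Set.Ioc (0:ℝ) s, μ (A ∩ {x | ENNReal.ofReal s ≤ k x}) := by
    rw [setLIntegral_const, Real.volume_Ioc, mul_comm]
    congr 2; simp
  rw [h1]
  unfold choquet
  calc ∫⁻ _ in Set.Ioc (0:ℝ) s, μ (A ∩ {x | ENNReal.ofReal s ≤ k x})
      ≤ ∫⁻ t in Set.Ioc (0:ℝ) s, μ (A ∩ {x | ENNReal.ofReal t ≤ k x}) :=
        setLIntegral_mono (dist_meas μ hμmono hA hk)
          (fun t ht => dist_antitone μ hμmono hA hk ht.2)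
    _ ≤ ∫⁻ t in Set.Ioi (0:ℝ), μ (A ∩ {x | ENNReal.ofReal t ≤ k x}) :=
        lintegral_mono_set Set.Ioc_subset_Ioi_self

end Choquet

section Choquet2

variable {X : Type*} [MeasurableSpace X]

lemma mu_subadd (μ : Set X → ℝ≥0∞) (hμ0 : μ ∅ = 0)
    (hsubmod : ∀ A B : Set X, MeasurableSet A → MeasurableSet B →
      μ (A ∩ B) + μ (A ∪ B) ≤ μ A + μ B)
    {S T : Set X} (hS : MeasurableSet S) (hT : MeasurableSet T) :
    μ (S ∪ T) ≤ μ S + μ T :=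
  le_trans le_add_self (hsubmod S T hS hT)

lemma choquet_trunc (μ : Set X → ℝ≥0∞) (hμ0 : μ ∅ = 0)
    (hμmono : ∀ A B : Set X, MeasurableSet A → MeasurableSet B → A ⊆ B → μ A ≤ μ B)
    {A : Set X} (hA : MeasurableSet A) {k : X → ℝ≥0∞} (hk : Measurable k) :
    choquet μ k A = ⨆ n : ℕ, choquet μ (fun x => min (k x) n) A := by
  have key : ∀ n : ℕ, choquet μ (fun x => min (k x) n) A
      = ∫⁻ t in Set.Ioc (0:ℝ) n, μ (A ∩ {x | ENNReal.ofReal t ≤ k x}) := by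
    intro n
    unfold choquet
    rw [← Set.Ioc_union_Ioi_eq_Ioi (Nat.cast_nonneg n : (0:ℝ) ≤ n),
      lintegral_union measurableSet_Ioi (Set.Ioc_disjoint_Ioi le_rfl)]
    have h2 : ∫⁻ t in Set.Ioi (n:ℝ), μ (A ∩ {x | ENNReal.ofReal t ≤ min (k x) n}) = 0 := by
      rw [setLIntegral_congr_fun measurableSet_Ioi
        (fun t (ht : t ∈ Set.Ioi (n:ℝ)) => ?_), lintegral_zero]
      have hempty : A ∩ {x | ENNReal.ofReal t ≤ min (k x) n} = ∅ := by
        refine Set.eq_empty_iff_forall_notMem.mpr fun x hx => ?_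
        have h3 : (n : ℝ≥0∞) < ENNReal.ofReal t := by
          rw [← ENNReal.ofReal_natCast n]
          exact ENNReal.ofReal_lt_ofReal_iff_of_nonneg (Nat.cast_nonneg n) |>.mpr ht
        exact absurd (le_trans hx.2 (min_le_right _ _)) (not_le.mpr h3)
      rw [hempty, hμ0]
    have h1 : ∫⁻ t in Set.Ioc (0:ℝ) n, μ (A ∩ {x | ENNReal.ofReal t ≤ min (k x) n})
        = ∫⁻ t in Set.Ioc (0:ℝ) n, μ (A ∩ {x | ENNReal.ofReal t ≤ k x}) := by
      refine setLIntegral_congr_fun measurableSet_Ioc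
        (fun t (ht : t ∈ Set.Ioc (0:ℝ) n) => ?_)
      have hbound : ENNReal.ofReal t ≤ (n : ℝ≥0∞) := by
        rw [← ENNReal.ofReal_natCast n]; exact ENNReal.ofReal_le_ofReal ht.2
      congr 1
      ext x
      simp only [Set.mem_inter_iff, Set.mem_setOf_eq, le_min_iff]
      exact ⟨fun hx => ⟨hx.1, hx.2.1⟩, fun hx => ⟨hx.1, hx.2, hbound⟩⟩
    rw [h1, h2, add_zero]
  rw [show choquet μ k A
      = ∫⁻ t in Set.Ioi (0:ℝ), μ (A ∩ {x | ENNReal.ofReal t ≤ k x}) from rfl,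
    sup_Ioc _ (dist_meas μ hμmono hA hk)]
  exact (iSup_congr fun n => (key n).symm)

end Choquet2

section KeyLemma

variable {X : Type*} [MeasurableSpace X]

lemma choquet_add_indicator (μ : Set X → ℝ≥0∞) (hμ0 : μ ∅ = 0)
    (hμmono : ∀ A B : Set X, MeasurableSet A → MeasurableSet B → A ⊆ B → μ A ≤ μ B)
    (hsubmod : ∀ A B : Set X, MeasurableSet A → MeasurableSet B →
      μ (A ∩ B) + μ (A ∪ B) ≤ μ A + μ B)
    {A : Set X} (hA : MeasurableSet A) {F : X → ℝ≥0∞} (hF : Measurable F)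
    {T : Set X} (hT : MeasurableSet T) {c : ℝ} (hc : 0 < c) :
    choquet μ (fun x => F x + T.indicator (fun _ => ENNReal.ofReal c) x) A
      ≤ choquet μ F A + ENNReal.ofReal c * μ (A ∩ T) := by
  classical
  by_cases hCF : choquet μ F A = ∞
  · rw [hCF]; exact le_top.trans le_self_add
  by_cases hT' : μ (A ∩ T) = ∞
  · rw [hT', ENNReal.mul_top (by simp [hc] : ENNReal.ofReal c ≠ 0)]
    exact le_top.trans le_add_self
  set CF := choquet μ F A with hCFdef
  set k : X → ℝ≥0∞ := fun x => F x + T.indicator (fun _ => ENNReal.ofReal c) x with hkdef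
  have hk : Measurable k := hF.add (measurable_const.indicator hT)
  set E : ℝ → Set X := fun s => A ∩ {x | ENNReal.ofReal s ≤ F x} with hEdef
  set T' : Set X := A ∩ T with hT'def
  have hT'meas : MeasurableSet T' := hA.inter hT
  have hEmeas : ∀ s, MeasurableSet (E s) := fun s => lv_meas hF hA s
  have hEanti : Antitone E := by
    intro s t hst
    exact Set.inter_subset_inter_right A fun x hx =>
      le_trans (ENNReal.ofReal_le_ofReal hst) hx
  have hEzero : ∀ s : ℝ, s ≤ 0 → E s = A := by
    intro s hs
    simp only [hEdef, ENNReal.ofReal_of_nonpos hs]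
    simp
  -- the level sets of k
  have hkey : ∀ t : ℝ, A ∩ {x | ENNReal.ofReal t ≤ k x} = E t ∪ (T' ∩ E (t - c)) := by
    intro t
    ext x
    simp only [Set.mem_inter_iff, Set.mem_setOf_eq, Set.mem_union, hkdef, hEdef, hT'def]
    constructor
    · rintro ⟨hxA, hxk⟩
      by_cases hxT : x ∈ T
      · rw [Set.indicator_of_mem hxT] at hxk
        refine Or.inr ⟨⟨hxA, hxT⟩, hxA, ?_⟩
        rw [ENNReal.ofReal_sub t hc.le]
        exact tsub_le_iff_right.mpr hxk
      · rw [Set.indicator_of_notMem hxT, add_zero] at hxk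
        exact Or.inl ⟨hxA, hxk⟩
    · rintro (⟨hxA, hxF⟩ | ⟨⟨hxA, hxT⟩, _, hxF⟩)
      · exact ⟨hxA, le_trans hxF le_self_add⟩
      · refine ⟨hxA, ?_⟩
        rw [Set.indicator_of_mem hxT]
        calc ENNReal.ofReal t = ENNReal.ofReal ((t - c) + c) := by ring_nf
          _ ≤ ENNReal.ofReal (t - c) + ENNReal.ofReal c := ENNReal.ofReal_add_le
          _ ≤ F x + ENNReal.ofReal c := add_le_add_left hxF _
    -- pointwise submodular inequality
  have hsub : ∀ t : ℝ, μ (A ∩ {x | ENNReal.ofReal t ≤ k x}) + μ (T' ∪ E (t - c))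
      ≤ μ (E t ∪ T') + μ (E (t - c)) := by
    intro t
    have hsubset : E t ⊆ E (t - c) := hEanti (by linarith)
    have hinter : (E t ∪ T') ∩ E (t - c) = E t ∪ (T' ∩ E (t - c)) := by
      rw [Set.union_inter_distrib_right, Set.inter_eq_self_of_subset_left hsubset]
    have hunion : (E t ∪ T') ∪ E (t - c) = T' ∪ E (t - c) := by
      rw [Set.union_assoc]
      exact Set.union_eq_self_of_subset_left (hsubset.trans Set.subset_union_right)
    have := hsubmod (E t ∪ T') (E (t - c)) ((hEmeas t).union hT'meas) (hEmeas (t - c))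
    rw [hinter, hunion] at this
    rw [hkey t]
    exact this
  -- measurability / antitonicity of the integrands
  have hmSk : Measurable fun t => μ (A ∩ {x | ENNReal.ofReal t ≤ k x}) :=
    dist_meas μ hμmono hA hk
  have hantiTE : Antitone fun t => μ (T' ∪ E t) := by
    intro s t hst
    exact hμmono _ _ (hT'meas.union (hEmeas t)) (hT'meas.union (hEmeas s))
      (Set.union_subset_union_right T' (hEanti hst))
  have hmTE : Measurable fun t => μ (T' ∪ E t) := hantiTE.measurable
  have hantiE : Antitone fun t => μ (E t) := dist_antitone μ hμmono hA hF
  have hmE : Measurable fun t => μ (E t) := hantiE.measurable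
  set J : ℝ → ℝ → ℝ≥0∞ := fun l u => ∫⁻ t in Set.Ioc l u, μ (T' ∪ E t) with hJdef
  set L : ℝ → ℝ≥0∞ := fun M => ∫⁻ t in Set.Ioc 0 M, μ (A ∩ {x | ENNReal.ofReal t ≤ k x})
    with hLdef
  have hcheb : ∀ s : ℝ, 0 < s → ENNReal.ofReal s * μ (E s) ≤ CF := fun s hs =>
    choquet_chebyshev μ hμmono hA hF hs
  have hEbound : ∀ M : ℝ, ∫⁻ t in Set.Ioc (0:ℝ) M, μ (E t) ≤ CF :=
    fun M => lintegral_mono_set Set.Ioc_subset_Ioi_self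
  have hJbound : ∀ M : ℝ, J 0 M ≤ ENNReal.ofReal M * μ T' + CF := by
    intro M
    calc J 0 M ≤ ∫⁻ t in Set.Ioc (0:ℝ) M, (μ T' + μ (E t)) :=
          lintegral_mono fun t => mu_subadd μ hμ0 hsubmod hT'meas (hEmeas t)
      _ = μ T' * volume (Set.Ioc (0:ℝ) M) + ∫⁻ t in Set.Ioc (0:ℝ) M, μ (E t) := by
          rw [lintegral_add_left measurable_const, setLIntegral_const]
      _ ≤ ENNReal.ofReal M * μ T' + CF := by
          rw [Real.volume_Ioc, sub_zero, mul_comm]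
          exact add_le_add_right (hEbound M) _
  have hJfin : ∀ M : ℝ, J 0 M ≠ ∞ := by
    intro M
    refine ne_top_of_le_ne_top ?_ (hJbound M)
    exact ENNReal.add_ne_top.mpr ⟨ENNReal.mul_ne_top ENNReal.ofReal_ne_top hT', hCF⟩
  have hpre : ∀ M : ℝ, (fun t => t + (-c)) ⁻¹' Set.Ioc 0 (M - c) = Set.Ioc c M := by
    intro M
    ext t
    simp only [Set.mem_preimage, Set.mem_Ioc]
    constructor <;> rintro ⟨h1, h2⟩ <;> constructor <;> linarith
  have hshiftTE : ∀ M : ℝ, ∫⁻ t in Set.Ioc c M, μ (T' ∪ E (t - c)) = J 0 (M - c) := by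
    intro M
    have h := lintegral_translate (fun s => μ (T' ∪ E s)) (-c)
      (s := Set.Ioc (0:ℝ) (M - c)) measurableSet_Ioc
    rw [hpre M] at h
    simp only [← sub_eq_add_neg] at h
    exact h.symm
  have hshiftE : ∀ M : ℝ, ∫⁻ t in Set.Ioc c M, μ (E (t - c))
      = ∫⁻ t in Set.Ioc (0:ℝ) (M - c), μ (E t) := by
    intro M
    have h := lintegral_translate (fun s => μ (E s)) (-c)
      (s := Set.Ioc (0:ℝ) (M - c)) measurableSet_Ioc
    rw [hpre M] at h
    simp only [← sub_eq_add_neg] at h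
    exact h.symm
  have hmain : ∀ M : ℝ, c ≤ M → L M + J 0 (M - c) ≤ J 0 M + CF := by
    intro M hM
    have hsplit : L M = (∫⁻ t in Set.Ioc (0:ℝ) c, μ (A ∩ {x | ENNReal.ofReal t ≤ k x}))
        + ∫⁻ t in Set.Ioc c M, μ (A ∩ {x | ENNReal.ofReal t ≤ k x}) := by
      show (∫⁻ t in Set.Ioc (0:ℝ) M, μ (A ∩ {x | ENNReal.ofReal t ≤ k x})) = _
      rw [← lintegral_union measurableSet_Ioc (Set.Ioc_disjoint_Ioc_of_le le_rfl),
        Set.Ioc_union_Ioc_eq_Ioc hc.le hM]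
    have hhead : (∫⁻ t in Set.Ioc (0:ℝ) c, μ (A ∩ {x | ENNReal.ofReal t ≤ k x})) = J 0 c := by
      refine setLIntegral_congr_fun measurableSet_Ioc
        (fun t (ht : t ∈ Set.Ioc (0:ℝ) c) => ?_)
      rw [hkey t, hEzero (t - c) (by linarith [ht.2]),
        Set.inter_eq_self_of_subset_left (Set.inter_subset_left), Set.union_comm]
    have hmid : (∫⁻ t in Set.Ioc c M, μ (A ∩ {x | ENNReal.ofReal t ≤ k x}))
        + ∫⁻ t in Set.Ioc c M, μ (T' ∪ E (t - c))
        ≤ J c M + ∫⁻ t in Set.Ioc c M, μ (E (t - c)) := by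
      show _ ≤ (∫⁻ t in Set.Ioc c M, μ (T' ∪ E t)) + ∫⁻ t in Set.Ioc c M, μ (E (t - c))
      rw [← lintegral_add_left hmSk, ← lintegral_add_left hmTE]
      refine lintegral_mono fun t => le_trans (hsub t) ?_
      rw [Set.union_comm (E t) T']
    calc L M + J 0 (M - c)
        = J 0 c + ((∫⁻ t in Set.Ioc c M, μ (A ∩ {x | ENNReal.ofReal t ≤ k x}))
          + ∫⁻ t in Set.Ioc c M, μ (T' ∪ E (t - c))) := by
          rw [hsplit, hhead, hshiftTE M]; ring
      _ ≤ J 0 c + (J c M + ∫⁻ t in Set.Ioc c M, μ (E (t - c))) := add_le_add_right hmid _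
      _ = (J 0 c + J c M) + ∫⁻ t in Set.Ioc (0:ℝ) (M - c), μ (E t) := by
          rw [hshiftE M]; ring
      _ ≤ J 0 M + CF := by
          have hJJ : J 0 c + J c M = J 0 M := by
            show (∫⁻ t in Set.Ioc (0:ℝ) c, μ (T' ∪ E t))
              + (∫⁻ t in Set.Ioc c M, μ (T' ∪ E t))
              = ∫⁻ t in Set.Ioc (0:ℝ) M, μ (T' ∪ E t)
            rw [← lintegral_union measurableSet_Ioc (Set.Ioc_disjoint_Ioc_of_le le_rfl),
              Set.Ioc_union_Ioc_eq_Ioc hc.le hM]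
          rw [hJJ]
          exact add_le_add_right (hEbound (M - c)) _
  have hcancel : ∀ M : ℝ, c ≤ M → L M ≤ J (M - c) M + CF := by
    intro M hM
    have hJsplit : J 0 M = J 0 (M - c) + J (M - c) M := by
      show (∫⁻ t in Set.Ioc (0:ℝ) M, μ (T' ∪ E t)) = _
      rw [← lintegral_union measurableSet_Ioc (Set.Ioc_disjoint_Ioc_of_le le_rfl),
        Set.Ioc_union_Ioc_eq_Ioc (by linarith) (by linarith)]
    have h1 : L M + J 0 (M - c) ≤ (J (M - c) M + CF) + J 0 (M - c) := by
      calc L M + J 0 (M - c) ≤ J 0 M + CF := hmain M hM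
        _ = (J (M - c) M + CF) + J 0 (M - c) := by rw [hJsplit]; ring
    exact (ENNReal.add_le_add_iff_right (hJfin (M - c))).mp h1
  have hJtail : ∀ M : ℝ, J (M - c) M ≤ ENNReal.ofReal c * (μ T' + μ (E (M - c))) := by
    intro M
    calc J (M - c) M ≤ ∫⁻ _ in Set.Ioc (M - c) M, (μ T' + μ (E (M - c))) := by
          refine setLIntegral_mono (by exact measurable_const)
            (fun t (ht : t ∈ Set.Ioc (M - c) M) => ?_)
          exact le_trans (mu_subadd μ hμ0 hsubmod hT'meas (hEmeas t))
            (add_le_add_right (hantiE ht.1.le) _)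
      _ = ENNReal.ofReal c * (μ T' + μ (E (M - c))) := by
          rw [setLIntegral_const, Real.volume_Ioc, mul_comm]
          congr 2
          ring
  -- conclude with an epsilon argument
  have hgoal : choquet μ k A = ⨆ n : ℕ, L (n : ℝ) := by
    rw [show choquet μ k A
      = ∫⁻ t in Set.Ioi (0:ℝ), μ (A ∩ {x | ENNReal.ofReal t ≤ k x}) from rfl,
      sup_Ioc _ hmSk]
  rw [hgoal]
  refine ENNReal.le_of_forall_pos_le_add fun ε hε _ => ?_
  set s₀ : ℝ := max 1 (c * CF.toReal / ε) with hs₀def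
  have hs₀pos : 0 < s₀ := lt_of_lt_of_le zero_lt_one (le_max_left _ _)
  have htail : ENNReal.ofReal c * μ (E s₀) ≤ (ε : ℝ≥0∞) := by
    have h1 : ENNReal.ofReal c * μ (E s₀) * ENNReal.ofReal s₀ ≤ (ε : ℝ≥0∞) * ENNReal.ofReal s₀ := by
      calc ENNReal.ofReal c * μ (E s₀) * ENNReal.ofReal s₀
          = ENNReal.ofReal c * (ENNReal.ofReal s₀ * μ (E s₀)) := by ring
        _ ≤ ENNReal.ofReal c * CF := mul_le_mul_right (hcheb s₀ hs₀pos) _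
        _ = ENNReal.ofReal c * ENNReal.ofReal CF.toReal := by rw [ENNReal.ofReal_toReal hCF]
        _ = ENNReal.ofReal (c * CF.toReal) := by
            rw [ENNReal.ofReal_mul hc.le]
        _ = ENNReal.ofReal (ε * (c * CF.toReal / ε)) := by
            congr 1
            field_simp
        _ ≤ ENNReal.ofReal (ε * s₀) := by
            refine ENNReal.ofReal_le_ofReal ?_
            exact mul_le_mul_of_nonneg_left (le_max_right _ _) ε.coe_nonneg
        _ = (ε : ℝ≥0∞) * ENNReal.ofReal s₀ := by
            rw [ENNReal.ofReal_mul ε.coe_nonneg, ENNReal.ofReal_coe_nnreal]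
    exact (ENNReal.mul_le_mul_iff_left (by simp [hs₀pos] : ENNReal.ofReal s₀ ≠ 0)
      ENNReal.ofReal_ne_top).mp h1
  refine iSup_le fun n => ?_
  set M : ℝ := (n : ℝ) + s₀ + c with hMdef
  have hM : c ≤ M := by
    have h1 := hs₀pos
    have h2 : (0:ℝ) ≤ (n:ℝ) := Nat.cast_nonneg n
    linarith
  calc L (n : ℝ) ≤ L M := lintegral_mono_set (Set.Ioc_subset_Ioc_right (by
        have := hs₀pos; linarith [hMdef]))
    _ ≤ J (M - c) M + CF := hcancel M hM
    _ ≤ ENNReal.ofReal c * (μ T' + μ (E (M - c))) + CF := add_le_add_left (hJtail M) _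
    _ = CF + ENNReal.ofReal c * μ T' + ENNReal.ofReal c * μ (E (M - c)) := by ring
    _ ≤ CF + ENNReal.ofReal c * μ T' + ENNReal.ofReal c * μ (E s₀) := by
        refine add_le_add_right (mul_le_mul_right (hμmono _ _ (hEmeas (M - c)) (hEmeas s₀)
          (hEanti (by
            have h2 : (0:ℝ) ≤ (n:ℝ) := Nat.cast_nonneg n
            linarith [hMdef] : s₀ ≤ M - c))) _) _
    _ ≤ CF + ENNReal.ofReal c * μ T' + (ε : ℝ≥0∞) := add_le_add_right htail _

end KeyLemma

section Subadd

variable {X : Type*} [MeasurableSpace X]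

lemma lintegral_scale' (Ψ : ℝ → ℝ≥0∞) (hΨ : Measurable Ψ) (a : ℝ) (ha : 0 < a)
    {S : Set ℝ} (hS : MeasurableSet S) :
    ∫⁻ t in (fun t => a * t) ⁻¹' S, Ψ (a * t) = ENNReal.ofReal a⁻¹ * ∫⁻ t in S, Ψ t := by
  have hmeas : Measurable (S.indicator Ψ) := hΨ.indicator hS
  have h1 : ∫⁻ t in (fun t => a * t) ⁻¹' S, Ψ (a * t)
      = ∫⁻ t, (S.indicator Ψ) (a * t) := by
    rw [← lintegral_indicator ((measurable_const_mul a) hS)]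
    refine lintegral_congr fun t => ?_
    by_cases h : a * t ∈ S
    · rw [Set.indicator_of_mem (show t ∈ (fun t => a * t) ⁻¹' S from h),
        Set.indicator_of_mem h]
    · rw [Set.indicator_of_notMem (show t ∉ (fun t => a * t) ⁻¹' S from h),
        Set.indicator_of_notMem h]
  rw [h1, ← lintegral_map hmeas (measurable_const_mul a),
    Real.map_volume_mul_left (ne_of_gt ha), lintegral_smul_measure,
    abs_of_pos (inv_pos.mpr ha), lintegral_indicator hS, smul_eq_mul]

lemma small_head (Ψ : ℝ → ℝ≥0∞) (hΨ : Measurable Ψ)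
    (hfin : ∫⁻ t in Set.Ioi (0:ℝ), Ψ t ≠ ∞) {ε : ℝ≥0∞} (hε : 0 < ε) :
    ∃ η : ℝ, 0 < η ∧ ∫⁻ t in Set.Ioc (0:ℝ) η, Ψ t ≤ ε := by
  by_contra hcon
  push_neg at hcon
  have hcon' : ∀ n : ℕ, ε ≤ ∫⁻ t in Set.Ioc (0:ℝ) (1/(n+1):ℝ), Ψ t := by
    intro n
    exact (hcon (1/(n+1):ℝ) (by positivity)).le
  have hsplit : ∀ n : ℕ, ∫⁻ t in Set.Ioi (0:ℝ), Ψ t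
      = (∫⁻ t in Set.Ioc (0:ℝ) (1/(n+1):ℝ), Ψ t) + ∫⁻ t in Set.Ioi (1/(n+1):ℝ), Ψ t := by
    intro n
    rw [← lintegral_union measurableSet_Ioi (Set.Ioc_disjoint_Ioi le_rfl),
      Set.Ioc_union_Ioi_eq_Ioi (by positivity)]
  -- sup of tails equals the whole integral
  have hsup : (⨆ n : ℕ, ∫⁻ t in Set.Ioi (1/(n+1):ℝ), Ψ t) = ∫⁻ t in Set.Ioi (0:ℝ), Ψ t := by
    set F : ℕ → ℝ → ℝ≥0∞ := fun n => (Set.Ioi (1/(n+1):ℝ)).indicator Ψ with hF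
    have hmono : Monotone F := by
      intro m n hmn t
      simp only [hF]
      by_cases h : t ∈ Set.Ioi (1/(m+1):ℝ)
      · have hmem : t ∈ Set.Ioi (1/(n+1):ℝ) := by
          simp only [Set.mem_Ioi] at *
          refine lt_of_le_of_lt ?_ h
          refine one_div_le_one_div_of_le (by positivity) ?_
          exact_mod_cast Nat.succ_le_succ hmn
        rw [Set.indicator_of_mem h]
        exact (Set.indicator_of_mem hmem Ψ).ge
      · rw [Set.indicator_of_notMem h]; exact zero_le
    have hpt : ∀ t, (⨆ n, F n t) = (Set.Ioi (0:ℝ)).indicator Ψ t := by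
      intro t
      by_cases ht : t ∈ Set.Ioi (0:ℝ)
      · rw [Set.indicator_of_mem ht]
        simp only [Set.mem_Ioi] at ht
        obtain ⟨n, hn⟩ := exists_nat_gt (1/t)
        apply le_antisymm
        · exact iSup_le fun m => Set.indicator_le_self _ _ t
        · have hmem : t ∈ Set.Ioi (1/(n+1):ℝ) := by
            simp only [Set.mem_Ioi]
            rw [div_lt_iff₀ (by positivity)]
            rw [div_lt_iff₀ ht] at hn
            nlinarith
          exact le_iSup_of_le n (Set.indicator_of_mem hmem Ψ).ge
      · simp only [Set.mem_Ioi, not_lt] at ht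
        rw [Set.indicator_of_notMem (by simpa using ht)]
        refine le_antisymm (iSup_le fun n => le_of_eq ?_) (zero_le)
        refine Set.indicator_of_notMem ?_ Ψ
        simp only [Set.mem_Ioi, not_lt]
        exact le_trans ht (by positivity)
    calc (⨆ n : ℕ, ∫⁻ t in Set.Ioi (1/(n+1):ℝ), Ψ t)
        = ⨆ n : ℕ, ∫⁻ t, F n t := by
          refine iSup_congr fun n => (lintegral_indicator measurableSet_Ioi Ψ).symm
      _ = ∫⁻ t, ⨆ n, F n t :=
          (lintegral_iSup (fun n => hΨ.indicator measurableSet_Ioi) hmono).symm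
      _ = ∫⁻ t, (Set.Ioi (0:ℝ)).indicator Ψ t := lintegral_congr fun t => hpt t
      _ = ∫⁻ t in Set.Ioi (0:ℝ), Ψ t := lintegral_indicator measurableSet_Ioi Ψ
  have hge : ε + (⨆ n : ℕ, ∫⁻ t in Set.Ioi (1/(n+1):ℝ), Ψ t) ≤ ∫⁻ t in Set.Ioi (0:ℝ), Ψ t := by
    rw [ENNReal.add_iSup]
    refine iSup_le fun n => ?_
    rw [hsplit n]
    exact add_le_add_left (hcon' n) _
  rw [hsup] at hge
  have : ε ≤ 0 := by
    have h2 : ε + ∫⁻ t in Set.Ioi (0:ℝ), Ψ t ≤ 0 + ∫⁻ t in Set.Ioi (0:ℝ), Ψ t := by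
      rw [zero_add]; exact hge
    exact (ENNReal.add_le_add_iff_right hfin).mp h2
  exact absurd (le_antisymm this (zero_le)) (ne_of_gt hε)

lemma choquet_iter (μ : Set X → ℝ≥0∞) (hμ0 : μ ∅ = 0)
    (hμmono : ∀ A B : Set X, MeasurableSet A → MeasurableSet B → A ⊆ B → μ A ≤ μ B)
    (hsubmod : ∀ A B : Set X, MeasurableSet A → MeasurableSet B →
      μ (A ∩ B) + μ (A ∪ B) ≤ μ A + μ B)
    {A : Set X} (hA : MeasurableSet A) {F : X → ℝ≥0∞} (hF : Measurable F)
    {δ : ℝ} (hδ : 0 < δ) (N : ℕ) (T : ℕ → Set X) (hT : ∀ i, MeasurableSet (T i)) :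
    choquet μ (fun x => F x + ∑ i ∈ Finset.range N,
        (T i).indicator (fun _ => ENNReal.ofReal δ) x) A
      ≤ choquet μ F A + ∑ i ∈ Finset.range N, ENNReal.ofReal δ * μ (A ∩ T i) := by
  induction N with
  | zero => simp
  | succ n ih =>
    have hFn : Measurable (fun x => F x + ∑ i ∈ Finset.range n,
        (T i).indicator (fun _ => ENNReal.ofReal δ) x) :=
      hF.add (Finset.measurable_sum _ fun i _ => measurable_const.indicator (hT i))
    have h1 : choquet μ (fun x => F x + ∑ i ∈ Finset.range (n+1),
        (T i).indicator (fun _ => ENNReal.ofReal δ) x) A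
        = choquet μ (fun x => (F x + ∑ i ∈ Finset.range n,
            (T i).indicator (fun _ => ENNReal.ofReal δ) x)
          + (T n).indicator (fun _ => ENNReal.ofReal δ) x) A := by
      congr 1
      funext x
      rw [Finset.sum_range_succ, add_assoc]
    rw [h1, Finset.sum_range_succ, ← add_assoc]
    exact le_trans
      (choquet_add_indicator μ hμ0 hμmono hsubmod hA hFn (hT n) hδ)
      (add_le_add_left ih _)

end Subadd

section Bounded

variable {X : Type*} [MeasurableSpace X]

lemma choquet_add_le_bounded (μ : Set X → ℝ≥0∞) (hμ0 : μ ∅ = 0)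
    (hμmono : ∀ A B : Set X, MeasurableSet A → MeasurableSet B → A ⊆ B → μ A ≤ μ B)
    (hsubmod : ∀ A B : Set X, MeasurableSet A → MeasurableSet B →
      μ (A ∩ B) + μ (A ∪ B) ≤ μ A + μ B)
    {A : Set X} (hA : MeasurableSet A) {F G : X → ℝ≥0∞}
    (hF : Measurable F) (hG : Measurable G) (N₀ : ℕ)
    (hGb : ∀ x, G x ≤ (N₀ : ℝ≥0∞))
    (hCF : choquet μ F A ≠ ∞) (hCG : choquet μ G A ≠ ∞) :
    choquet μ (fun x => F x + G x) A ≤ choquet μ F A + choquet μ G A := by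
  classical
  have hFG : Measurable fun x => F x + G x := hF.add hG
  set Φ : ℝ → ℝ≥0∞ := fun t => μ (A ∩ {x | ENNReal.ofReal t ≤ F x})
    + μ (A ∩ {x | ENNReal.ofReal t ≤ G x}) with hΦdef
  have hΦmeas : Measurable Φ := (dist_meas μ hμmono hA hF).add (dist_meas μ hμmono hA hG)
  have hΦint : ∫⁻ t in Set.Ioi (0:ℝ), Φ t = choquet μ F A + choquet μ G A := by
    exact lintegral_add_left (dist_meas μ hμmono hA hF) _
  have hΦfin : ∫⁻ t in Set.Ioi (0:ℝ), Φ t ≠ ∞ := by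
    rw [hΦint]; exact ENNReal.add_ne_top.mpr ⟨hCF, hCG⟩
  refine ENNReal.le_of_forall_pos_le_add fun ε hε _ => ?_
  have hε2 : (0:ℝ≥0∞) < (ε : ℝ≥0∞)/2 :=
    ENNReal.div_pos (by exact_mod_cast hε.ne') (by norm_num)
  obtain ⟨η, hη, hhead⟩ := small_head Φ hΦmeas hΦfin hε2
  -- the layers
  set N : ℕ := ⌈(N₀:ℝ)/η⌉₊ + 1 with hNdef
  have hNη : (N₀ : ℝ) ≤ N * η := by
    have h1 : (N₀:ℝ)/η ≤ ⌈(N₀:ℝ)/η⌉₊ := Nat.le_ceil _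
    have h2 : ((⌈(N₀:ℝ)/η⌉₊ : ℝ)) ≤ ((N:ℕ):ℝ) := by
      rw [hNdef]; push_cast; linarith
    rw [div_le_iff₀ hη] at h1
    calc (N₀:ℝ) ≤ ⌈(N₀:ℝ)/η⌉₊ * η := h1
      _ ≤ N * η := by nlinarith [hη]
  set T : ℕ → Set X := fun i => {x | ENNReal.ofReal ((i+1)*η) ≤ G x} with hTdef
  have hTmeas : ∀ i, MeasurableSet (T i) := fun i => hG measurableSet_Ici
  set Gη : X → ℝ≥0∞ := fun x => ∑ i ∈ Finset.range N,
    (T i).indicator (fun _ => ENNReal.ofReal η) x with hGηdef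
  -- pointwise approximation
  have claim1 : ∀ x, G x ≤ Gη x + ENNReal.ofReal η := by
    intro x
    have hGfin : G x ≠ ∞ := (lt_of_le_of_lt (hGb x) (ENNReal.natCast_lt_top N₀)).ne
    set r : ℝ := (G x).toReal with hrdef
    have hr0 : 0 ≤ r := ENNReal.toReal_nonneg
    have hrG : G x = ENNReal.ofReal r := (ENNReal.ofReal_toReal hGfin).symm
    have hrN : r ≤ (N₀:ℝ) := by
      rw [hrdef]
      calc (G x).toReal ≤ ((N₀:ℝ≥0∞)).toReal :=
            ENNReal.toReal_mono (ENNReal.natCast_ne_top N₀) (hGb x)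
        _ = (N₀:ℝ) := by simp
    set m : ℕ := ⌊r/η⌋₊ with hmdef
    have hmr : (m:ℝ) ≤ r/η := Nat.floor_le (by positivity)
    have hmN : m ≤ N := by
      have h1 : m ≤ ⌈(N₀:ℝ)/η⌉₊ :=
        le_trans (Nat.floor_le_floor (by gcongr)) (Nat.floor_le_ceil _)
      rw [hNdef]
      omega
    have hsum : (m:ℝ≥0∞) * ENNReal.ofReal η ≤ Gη x := by
      have heach : ∀ i ∈ Finset.range m, (T i).indicator (fun _ => ENNReal.ofReal η) x
          = ENNReal.ofReal η := by
        intro i hi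
        refine Set.indicator_of_mem ?_ _
        rw [hTdef]
        show ENNReal.ofReal ((i+1)*η) ≤ G x
        rw [hrG]
        refine ENNReal.ofReal_le_ofReal ?_
        have hi' : (i:ℝ) + 1 ≤ m := by
          have := Finset.mem_range.mp hi
          exact_mod_cast this
        calc ((i:ℝ)+1)*η ≤ (m:ℝ)*η := by nlinarith
          _ ≤ r := (le_div_iff₀ hη).mp hmr
      calc (m:ℝ≥0∞) * ENNReal.ofReal η
          = ∑ _i ∈ Finset.range m, ENNReal.ofReal η := by
            rw [Finset.sum_const, Finset.card_range, nsmul_eq_mul]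
        _ = ∑ i ∈ Finset.range m, (T i).indicator (fun _ => ENNReal.ofReal η) x :=
            (Finset.sum_congr rfl heach).symm
        _ ≤ Gη x := Finset.sum_le_sum_of_subset
            (Finset.range_subset_range.mpr hmN)
    have hup : G x ≤ (m:ℝ≥0∞) * ENNReal.ofReal η + ENNReal.ofReal η := by
      have h1 : r < ((m:ℝ)+1)*η := by
        have := Nat.lt_floor_add_one (r/η)
        rw [div_lt_iff₀ hη] at this
        exact this
      rw [hrG]
      calc ENNReal.ofReal r ≤ ENNReal.ofReal ((m:ℝ)*η + η) := by
            refine ENNReal.ofReal_le_ofReal ?_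
            nlinarith
        _ = ENNReal.ofReal ((m:ℝ)*η) + ENNReal.ofReal η :=
            ENNReal.ofReal_add (by positivity) hη.le
        _ = (m:ℝ≥0∞) * ENNReal.ofReal η + ENNReal.ofReal η := by
            rw [ENNReal.ofReal_mul (by positivity), ENNReal.ofReal_natCast]
    exact le_trans hup (add_le_add_left hsum _)
  -- sum of layer masses is at most the integral of G
  have claim2 : ∑ i ∈ Finset.range N, ENNReal.ofReal η * μ (A ∩ T i)
      ≤ choquet μ G A := by
    have hterm : ∀ i : ℕ, ENNReal.ofReal η * μ (A ∩ T i)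
        ≤ ∫⁻ t in Set.Ioc ((i:ℝ)*η) (((i:ℝ)+1)*η), μ (A ∩ {x | ENNReal.ofReal t ≤ G x}) := by
      intro i
      have h1 : ENNReal.ofReal η * μ (A ∩ T i)
          = ∫⁻ _ in Set.Ioc ((i:ℝ)*η) (((i:ℝ)+1)*η), μ (A ∩ T i) := by
        rw [setLIntegral_const, Real.volume_Ioc, mul_comm]
        congr 2
        ring
      rw [h1]
      refine setLIntegral_mono (dist_meas μ hμmono hA hG)
        (fun t (ht : t ∈ Set.Ioc ((i:ℝ)*η) (((i:ℝ)+1)*η)) => ?_)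
      exact dist_antitone μ hμmono hA hG ht.2
    have hchain : ∀ n : ℕ, (∑ i ∈ Finset.range n,
        ∫⁻ t in Set.Ioc ((i:ℝ)*η) (((i:ℝ)+1)*η), μ (A ∩ {x | ENNReal.ofReal t ≤ G x}))
        = ∫⁻ t in Set.Ioc (0:ℝ) (n*η), μ (A ∩ {x | ENNReal.ofReal t ≤ G x}) := by
      intro n
      induction n with
      | zero => simp
      | succ n ih =>
        rw [Finset.sum_range_succ, ih,
          ← lintegral_union measurableSet_Ioc (Set.Ioc_disjoint_Ioc_of_le le_rfl),
          Set.Ioc_union_Ioc_eq_Ioc (by positivity) (by push_cast; nlinarith [hη])]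
        push_cast
        ring_nf
    calc ∑ i ∈ Finset.range N, ENNReal.ofReal η * μ (A ∩ T i)
        ≤ ∑ i ∈ Finset.range N, ∫⁻ t in Set.Ioc ((i:ℝ)*η) (((i:ℝ)+1)*η),
            μ (A ∩ {x | ENNReal.ofReal t ≤ G x}) :=
          Finset.sum_le_sum fun i _ => hterm i
      _ = ∫⁻ t in Set.Ioc (0:ℝ) (N*η), μ (A ∩ {x | ENNReal.ofReal t ≤ G x}) := hchain N
      _ ≤ choquet μ G A := lintegral_mono_set Set.Ioc_subset_Ioi_self
  -- tail estimate
  have claim3 : ∫⁻ t in Set.Ioi (2*η), μ (A ∩ {x | ENNReal.ofReal t ≤ F x + G x})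
      ≤ choquet μ F A + choquet μ G A := by
    have hpre : (fun t => t + 2*η) ⁻¹' Set.Ioi (2*η) = Set.Ioi (0:ℝ) := by
      ext t
      simp only [Set.mem_preimage, Set.mem_Ioi]
      constructor <;> intro h <;> linarith
    have hshift := lintegral_translate
      (fun t => μ (A ∩ {x | ENNReal.ofReal t ≤ F x + G x})) (2*η)
      (s := Set.Ioi (2*η)) measurableSet_Ioi
    rw [hpre] at hshift
    rw [hshift]
    have hincl : ∀ t : ℝ, A ∩ {x | ENNReal.ofReal (t + 2*η) ≤ F x + G x}
        ⊆ A ∩ {x | ENNReal.ofReal t ≤ F x + Gη x} := by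
      intro t
      refine Set.inter_subset_inter_right A fun x hx => ?_
      simp only [Set.mem_setOf_eq] at *
      rcases le_or_gt t 0 with ht | ht
      · rw [ENNReal.ofReal_of_nonpos ht]; exact zero_le
      · have h1 : ENNReal.ofReal (t + 2*η) = ENNReal.ofReal t + ENNReal.ofReal η
            + ENNReal.ofReal η := by
          rw [← ENNReal.ofReal_add ht.le hη.le, ← ENNReal.ofReal_add (by linarith) hη.le]
          ring_nf
        have h2 : ENNReal.ofReal t + ENNReal.ofReal η + ENNReal.ofReal η
            ≤ (F x + Gη x) + ENNReal.ofReal η := by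
          rw [← h1]
          refine le_trans hx ?_
          calc F x + G x ≤ F x + (Gη x + ENNReal.ofReal η) :=
                add_le_add_right (claim1 x) _
            _ = (F x + Gη x) + ENNReal.ofReal η := by ring
        have h3 : ENNReal.ofReal t + ENNReal.ofReal η ≤ F x + Gη x :=
          (ENNReal.add_le_add_iff_right ENNReal.ofReal_ne_top).mp h2
        exact le_trans le_self_add h3
    calc ∫⁻ t in Set.Ioi (0:ℝ), μ (A ∩ {x | ENNReal.ofReal (t + 2*η) ≤ F x + G x})
        ≤ ∫⁻ t in Set.Ioi (0:ℝ), μ (A ∩ {x | ENNReal.ofReal t ≤ F x + Gη x}) := by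
          have hGηmeas : Measurable Gη :=
            Finset.measurable_sum _ fun i _ => measurable_const.indicator (hTmeas i)
          refine lintegral_mono fun t => ?_
          exact hμmono _ _ (lv_meas hFG hA (t + 2*η)) (lv_meas (hF.add hGηmeas) hA t)
            (hincl t)
      _ ≤ choquet μ F A + ∑ i ∈ Finset.range N, ENNReal.ofReal η * μ (A ∩ T i) :=
          choquet_iter μ hμ0 hμmono hsubmod hA hF hη N T hTmeas
      _ ≤ choquet μ F A + choquet μ G A := add_le_add_right claim2 _
  -- head estimate
  have claim4 : ∫⁻ t in Set.Ioc (0:ℝ) (2*η), μ (A ∩ {x | ENNReal.ofReal t ≤ F x + G x})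
      ≤ (ε : ℝ≥0∞) := by
    have hpt : ∀ t ∈ Set.Ioc (0:ℝ) (2*η),
        μ (A ∩ {x | ENNReal.ofReal t ≤ F x + G x}) ≤ Φ ((1/2)*t) := by
      intro t ht
      have hincl : A ∩ {x | ENNReal.ofReal t ≤ F x + G x}
          ⊆ (A ∩ {x | ENNReal.ofReal ((1/2)*t) ≤ F x})
            ∪ (A ∩ {x | ENNReal.ofReal ((1/2)*t) ≤ G x}) := by
        intro x hx
        rcases le_or_gt (ENNReal.ofReal ((1/2)*t)) (F x) with hle | hlt
        · exact Or.inl ⟨hx.1, hle⟩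
        rcases le_or_gt (ENNReal.ofReal ((1/2)*t)) (G x) with hle2 | hlt2
        · exact Or.inr ⟨hx.1, hle2⟩
        exfalso
        have hsum : F x + G x < ENNReal.ofReal ((1/2)*t) + ENNReal.ofReal ((1/2)*t) :=
          ENNReal.add_lt_add hlt hlt2
        rw [← ENNReal.ofReal_add (by linarith [ht.1]) (by linarith [ht.1])] at hsum
        have ht2 : (1/2)*t + (1/2)*t = t := by ring
        rw [ht2] at hsum
        exact absurd hx.2 (not_le.mpr hsum)
      calc μ (A ∩ {x | ENNReal.ofReal t ≤ F x + G x})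
          ≤ μ ((A ∩ {x | ENNReal.ofReal ((1/2)*t) ≤ F x})
              ∪ (A ∩ {x | ENNReal.ofReal ((1/2)*t) ≤ G x})) :=
            hμmono _ _ (lv_meas hFG hA t)
              ((lv_meas hF hA _).union (lv_meas hG hA _)) hincl
        _ ≤ Φ ((1/2)*t) :=
            mu_subadd μ hμ0 hsubmod (lv_meas hF hA _) (lv_meas hG hA _)
    have hpre2 : (fun t => (1/2:ℝ)*t) ⁻¹' (Set.Ioc 0 η) = Set.Ioc (0:ℝ) (2*η) := by
      ext t
      simp only [Set.mem_preimage, Set.mem_Ioc]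
      constructor <;> rintro ⟨h1, h2⟩ <;> constructor <;> linarith
    calc ∫⁻ t in Set.Ioc (0:ℝ) (2*η), μ (A ∩ {x | ENNReal.ofReal t ≤ F x + G x})
        ≤ ∫⁻ t in Set.Ioc (0:ℝ) (2*η), Φ ((1/2)*t) :=
          setLIntegral_mono (hΦmeas.comp (measurable_const_mul (1/2))) hpt
      _ = ENNReal.ofReal ((1/2:ℝ)⁻¹) * ∫⁻ t in Set.Ioc (0:ℝ) η, Φ t := by
          rw [← hpre2]
          exact lintegral_scale' Φ hΦmeas (1/2) (by norm_num) measurableSet_Ioc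
      _ ≤ 2 * ((ε : ℝ≥0∞)/2) := by
          rw [show ((1/2:ℝ)⁻¹) = (2:ℝ) by norm_num, ENNReal.ofReal_ofNat]
          exact mul_le_mul_right hhead _
      _ = (ε : ℝ≥0∞) := ENNReal.mul_div_cancel' (by norm_num) (by norm_num)
  -- assemble
  have hsplit : choquet μ (fun x => F x + G x) A
      = (∫⁻ t in Set.Ioc (0:ℝ) (2*η), μ (A ∩ {x | ENNReal.ofReal t ≤ F x + G x}))
        + ∫⁻ t in Set.Ioi (2*η), μ (A ∩ {x | ENNReal.ofReal t ≤ F x + G x}) := by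
    show (∫⁻ t in Set.Ioi (0:ℝ), μ (A ∩ {x | ENNReal.ofReal t ≤ F x + G x})) = _
    rw [← lintegral_union measurableSet_Ioi (Set.Ioc_disjoint_Ioi le_rfl),
      Set.Ioc_union_Ioi_eq_Ioi (by linarith)]
  calc choquet μ (fun x => F x + G x) A
      ≤ (ε : ℝ≥0∞) + (choquet μ F A + choquet μ G A) := by
        rw [hsplit]; exact add_le_add claim4 claim3
    _ = choquet μ F A + choquet μ G A + (ε : ℝ≥0∞) := by ring

end Bounded

section SubaddMain

variable {X : Type*} [MeasurableSpace X]

lemma choquet_add_le (μ : Set X → ℝ≥0∞) (hμ0 : μ ∅ = 0)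
    (hμmono : ∀ A B : Set X, MeasurableSet A → MeasurableSet B → A ⊆ B → μ A ≤ μ B)
    (hsubmod : ∀ A B : Set X, MeasurableSet A → MeasurableSet B →
      μ (A ∩ B) + μ (A ∪ B) ≤ μ A + μ B)
    {A : Set X} (hA : MeasurableSet A) {F G : X → ℝ≥0∞}
    (hF : Measurable F) (hG : Measurable G) :
    choquet μ (fun x => F x + G x) A ≤ choquet μ F A + choquet μ G A := by
  by_cases hCF : choquet μ F A = ∞
  · rw [hCF]; exact le_top.trans le_self_add
  by_cases hCG : choquet μ G A = ∞
  · rw [hCG]; exact le_top.trans le_add_self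
  have hFG : Measurable fun x => F x + G x := hF.add hG
  rw [choquet_trunc μ hμ0 hμmono hA hFG]
  refine iSup_le fun n => ?_
  have hGn : Measurable fun x => min (G x) (n : ℝ≥0∞) := hG.min measurable_const
  have h1 : choquet μ (fun x => min ((fun x => F x + G x) x) (n:ℕ)) A
      ≤ choquet μ (fun x => F x + min (G x) (n : ℝ≥0∞)) A := by
    refine choquet_mono μ hμmono hA (hFG.min measurable_const) (hF.add hGn) fun x => ?_
    rcases le_or_gt (G x) (n : ℝ≥0∞) with h | h
    · rw [min_eq_left h]
      exact min_le_left _ _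
    · rw [min_eq_right h.le]
      exact le_trans (min_le_right _ _) le_add_self
  refine le_trans h1 ?_
  have h2 : choquet μ (fun x => min (G x) (n : ℝ≥0∞)) A ≠ ∞ :=
    ne_top_of_le_ne_top hCG
      (choquet_mono μ hμmono hA hGn hG fun x => min_le_left _ _)
  refine le_trans (choquet_add_le_bounded μ hμ0 hμmono hsubmod hA hF hGn n
    (fun x => min_le_right _ _) hCF h2) ?_
  exact add_le_add_right
    (choquet_mono μ hμmono hA hGn hG fun x => min_le_left _ _) _

end SubaddMain

section YoungOpt

lemma ennreal_young_opt {p q : ℝ} (hp : 1 < p) (hpq : 1/p + 1/q = 1)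
    {S T C : ℝ≥0∞} (hS0 : S ≠ 0) (hSf : S ≠ ∞) (hTf : T ≠ ∞)
    (hC : ∀ L : ℝ≥0∞, L ≠ 0 → L ≠ ∞ →
      C ≤ L ^ p / ENNReal.ofReal p * S + (L ^ q * ENNReal.ofReal q)⁻¹ * T) :
    C ≤ S ^ (1/p) * T ^ (1/q) := by
  have hp0 : (0:ℝ) < p := lt_trans zero_lt_one hp
  have h1p : 1/p < 1 := by rw [div_lt_one hp0]; exact hp
  have h1p0 : 0 < 1/p := by positivity
  have h1q0 : 0 < 1/q := by linarith
  have hq0 : (0:ℝ) < q := one_div_pos.mp h1q0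
  set P := ENNReal.ofReal p with hPdef
  set Q := ENNReal.ofReal q with hQdef
  have hP0 : P ≠ 0 := by simp [hPdef, hp0]
  have hPf : P ≠ ∞ := ENNReal.ofReal_ne_top
  have hQ0 : Q ≠ 0 := by simp [hQdef, hq0]
  have hQf : Q ≠ ∞ := ENNReal.ofReal_ne_top
  have hPQ : P⁻¹ + Q⁻¹ = 1 := by
    rw [hPdef, hQdef, ← ENNReal.ofReal_inv_of_pos hp0, ← ENNReal.ofReal_inv_of_pos hq0,
      ← ENNReal.ofReal_add (by positivity) (by positivity)]
    rw [show p⁻¹ + q⁻¹ = 1/p + 1/q by rw [one_div, one_div], hpq, ENNReal.ofReal_one]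
  by_cases hT0 : T = 0
  · subst hT0
    rw [ENNReal.zero_rpow_of_pos h1q0, mul_zero]
    refine ENNReal.le_of_forall_pos_le_add fun ε hε _ => ?_
    rw [zero_add]
    have hB0 : (ε:ℝ≥0∞) * P / S ≠ 0 :=
      (ENNReal.div_pos (mul_ne_zero (by exact_mod_cast hε.ne') hP0) hSf).ne'
    have hBf : (ε:ℝ≥0∞) * P / S ≠ ∞ :=
      (ENNReal.div_lt_top (ENNReal.mul_ne_top ENNReal.coe_ne_top hPf) hS0).ne
    set L : ℝ≥0∞ := ((ε:ℝ≥0∞) * P / S) ^ (1/p) with hLdef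
    have hL0 : L ≠ 0 := by
      rw [hLdef]
      simp only [ne_eq, ENNReal.rpow_eq_zero_iff, not_or, not_and_or]
      exact ⟨Or.inl hB0, Or.inl hBf⟩
    have hLf : L ≠ ∞ := ENNReal.rpow_ne_top_of_nonneg h1p0.le hBf
    have hLp : L ^ p = (ε:ℝ≥0∞) * P / S := by
      rw [hLdef, ← ENNReal.rpow_mul, one_div_mul_cancel hp0.ne', ENNReal.rpow_one]
    have h2 := hC L hL0 hLf
    rw [hLp, mul_zero, add_zero] at h2
    refine le_trans h2 (le_of_eq ?_)
    calc (ε:ℝ≥0∞) * P / S / P * S = (ε:ℝ≥0∞) * (P * P⁻¹) * (S⁻¹ * S) := by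
          rw [div_eq_mul_inv, div_eq_mul_inv]; ring
      _ = (ε:ℝ≥0∞) := by
          rw [ENNReal.mul_inv_cancel hP0 hPf, ENNReal.inv_mul_cancel hS0 hSf,
            mul_one, mul_one]
  · -- optimal choice of L
    have hB0 : T / S ≠ 0 := (ENNReal.div_pos hT0 hSf).ne'
    have hBf : T / S ≠ ∞ := (ENNReal.div_lt_top hTf hS0).ne
    set L : ℝ≥0∞ := (T / S) ^ (1/(p*q)) with hLdef
    have hL0 : L ≠ 0 := by
      rw [hLdef]
      simp only [ne_eq, ENNReal.rpow_eq_zero_iff, not_or, not_and_or]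
      exact ⟨Or.inl hB0, Or.inl hBf⟩
    have hLf : L ≠ ∞ := ENNReal.rpow_ne_top_of_nonneg (by positivity) hBf
    have hLp : L ^ p = T ^ (1/q) / S ^ (1/q) := by
      rw [hLdef, ← ENNReal.rpow_mul,
        show 1/(p*q) * p = 1/q by field_simp,
        ENNReal.div_rpow_of_nonneg _ _ h1q0.le]
    have hLq : L ^ q = T ^ (1/p) / S ^ (1/p) := by
      rw [hLdef, ← ENNReal.rpow_mul,
        show 1/(p*q) * q = 1/p by field_simp,
        ENNReal.div_rpow_of_nonneg _ _ h1p0.le]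
    have hSq0 : S ^ (1/q) ≠ 0 := (ENNReal.rpow_pos (zero_lt_iff.mpr hS0) hSf).ne'
    have hSqf : S ^ (1/q) ≠ ∞ := ENNReal.rpow_ne_top_of_nonneg h1q0.le hSf
    have hTp0 : T ^ (1/p) ≠ 0 := (ENNReal.rpow_pos (zero_lt_iff.mpr hT0) hTf).ne'
    have hTpf : T ^ (1/p) ≠ ∞ := ENNReal.rpow_ne_top_of_nonneg h1p0.le hTf
    have hkey1 : S * (S ^ (1/q))⁻¹ = S ^ (1/p) := by
      nth_rewrite 1 [← ENNReal.rpow_one S]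
      rw [← ENNReal.rpow_neg, ← ENNReal.rpow_add _ _ hS0 hSf]
      congr 1
      linarith
    have hkey2 : T * (T ^ (1/p))⁻¹ = T ^ (1/q) := by
      nth_rewrite 1 [← ENNReal.rpow_one T]
      rw [← ENNReal.rpow_neg, ← ENNReal.rpow_add _ _ hT0 hTf]
      congr 1
      linarith
    have hterm1 : L ^ p / P * S = S ^ (1/p) * T ^ (1/q) * P⁻¹ := by
      calc L ^ p / P * S = T ^ (1/q) * (S * (S ^ (1/q))⁻¹) * P⁻¹ := by
            rw [hLp, div_eq_mul_inv, div_eq_mul_inv]; ring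
        _ = S ^ (1/p) * T ^ (1/q) * P⁻¹ := by rw [hkey1]; ring
    have hterm2 : (L ^ q * Q)⁻¹ * T = S ^ (1/p) * T ^ (1/q) * Q⁻¹ := by
      have hinv : (L ^ q)⁻¹ = S ^ (1/p) * (T ^ (1/p))⁻¹ := by
        rw [hLq, div_eq_mul_inv, ENNReal.mul_inv (Or.inl hTp0) (Or.inl hTpf), inv_inv]
        ring
      calc (L ^ q * Q)⁻¹ * T
          = (L ^ q)⁻¹ * Q⁻¹ * T := by
            rw [ENNReal.mul_inv (Or.inr hQf) (Or.inr hQ0)]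
        _ = S ^ (1/p) * (T * (T ^ (1/p))⁻¹) * Q⁻¹ := by rw [hinv]; ring
        _ = S ^ (1/p) * T ^ (1/q) * Q⁻¹ := by rw [hkey2]
    calc C ≤ L ^ p / P * S + (L ^ q * Q)⁻¹ * T := hC L hL0 hLf
      _ = S ^ (1/p) * T ^ (1/q) * (P⁻¹ + Q⁻¹) := by
          rw [hterm1, hterm2, mul_add]
      _ = S ^ (1/p) * T ^ (1/q) := by rw [hPQ, mul_one]

end YoungOpt

/-- Carlson type inequality for the Choquet integral with respect to a
submodular monotone measure:
`(C)∫_A f dμ ≤ 2^{1/p} (ab)^{1/p} ((C)∫_A (bg + ah)^{−(q−1)} dμ)^{1/q}`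
where `a = (C)∫_A g f^p dμ` and `b = (C)∫_A h f^p dμ`. -/
theorem carlson_choquet_submodular {X : Type*} [MeasurableSpace X]
    -- μ : F → [0,∞] is a submodular monotone measure
    (μ : Set X → ℝ≥0∞)
    (hμ0 : μ ∅ = 0) (hμX : 0 < μ Set.univ)
    (hμmono : ∀ A B : Set X, MeasurableSet A → MeasurableSet B → A ⊆ B → μ A ≤ μ B)
    (hsubmod : ∀ A B : Set X, MeasurableSet A → MeasurableSet B →
      μ (A ∩ B) + μ (A ∪ B) ≤ μ A + μ B)
    -- p > 1, 1/p + 1/q = 1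
    (p q : ℝ) (hp : 1 < p) (hpq : 1/p + 1/q = 1)
    (A : Set X) (hA : MeasurableSet A)
    -- f, g, h : X → [0,∞) measurable
    (f g h : X → ℝ≥0) (hf : Measurable f) (hg : Measurable g) (hh : Measurable h)
    -- a = (C)∫_A g f^p dμ, b = (C)∫_A h f^p dμ, with 0 < a < ∞ and 0 < b < ∞
    (a b : ℝ≥0∞)
    (ha : a = choquet μ (fun x => (g x : ℝ≥0∞) * (f x : ℝ≥0∞) ^ p) A)
    (hb : b = choquet μ (fun x => (h x : ℝ≥0∞) * (f x : ℝ≥0∞) ^ p) A)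
    (ha0 : 0 < a) (haf : a < ∞) (hb0 : 0 < b) (hbf : b < ∞) :
    choquet μ (fun x => (f x : ℝ≥0∞)) A ≤
      (2 : ℝ≥0∞) ^ (1/p) * (a * b) ^ (1/p) *
        (choquet μ (fun x => (b * (g x : ℝ≥0∞) + a * (h x : ℝ≥0∞)) ^ (-(q-1))) A)
          ^ (1/q) := by
    classical
  -- exponent arithmetic
  have hp0 : (0:ℝ) < p := lt_trans zero_lt_one hp
  have h1p : 1/p < 1 := by rw [div_lt_one hp0]; exact hp
  have h1p0 : (0:ℝ) < 1/p := by positivity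
  have h1q0 : (0:ℝ) < 1/q := by linarith
  have hq0 : (0:ℝ) < q := one_div_pos.mp h1q0
  have hq1 : 1 < q := (div_lt_one hq0).mp (by linarith)
  have hsumpq : q + p = p * q := by
    have h1 := hpq
    field_simp at h1
    linarith
  have hqexp : (-(1/p)) * q = -(q-1) := by
    have hne : p ≠ 0 := hp0.ne'
    field_simp
    nlinarith [hsumpq]
  have hconj : Real.HolderConjugate p q := Real.holderConjugate_iff.mpr ⟨hp, by
    rw [← one_div, ← one_div]; exact hpq⟩
  -- measurability
  have hfm : Measurable fun x => (f x : ℝ≥0∞) := hf.coe_nnreal_ennreal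
  have hgm : Measurable fun x => (g x : ℝ≥0∞) := hg.coe_nnreal_ennreal
  have hhm : Measurable fun x => (h x : ℝ≥0∞) := hh.coe_nnreal_ennreal
  have hfp : Measurable fun x => (f x : ℝ≥0∞) ^ p := hfm.pow measurable_const
  set w : X → ℝ≥0∞ := fun x => b * (g x : ℝ≥0∞) + a * (h x : ℝ≥0∞) with hwdef
  have hwm : Measurable w := (measurable_const.mul hgm).add (measurable_const.mul hhm)
  have hwfin : ∀ x, w x ≠ ∞ := fun x => ENNReal.add_ne_top.mpr
    ⟨ENNReal.mul_ne_top hbf.ne ENNReal.coe_ne_top,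
     ENNReal.mul_ne_top haf.ne ENNReal.coe_ne_top⟩
  have hwqm : Measurable fun x => w x ^ (-(q-1)) := hwm.pow measurable_const
  set Tq : ℝ≥0∞ := choquet μ (fun x => (b * (g x : ℝ≥0∞) + a * (h x : ℝ≥0∞)) ^ (-(q-1))) A
    with hTqdef
  have hTq' : choquet μ (fun x => w x ^ (-(q-1))) A = Tq := rfl
  set S : ℝ≥0∞ := choquet μ (fun x => w x * (f x : ℝ≥0∞) ^ p) A with hSdef
  have hwfp_m : Measurable fun x => w x * (f x : ℝ≥0∞) ^ p := hwm.mul hfp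
  have hgfp_m : Measurable fun x => (g x : ℝ≥0∞) * (f x : ℝ≥0∞) ^ p := hgm.mul hfp
  have hhfp_m : Measurable fun x => (h x : ℝ≥0∞) * (f x : ℝ≥0∞) ^ p := hhm.mul hfp
  have hbg_m : Measurable fun x => b * ((g x : ℝ≥0∞) * (f x : ℝ≥0∞) ^ p) :=
    measurable_const.mul hgfp_m
  have hah_m : Measurable fun x => a * ((h x : ℝ≥0∞) * (f x : ℝ≥0∞) ^ p) :=
    measurable_const.mul hhfp_m
  -- bounds on S
  have hSle : S ≤ 2 * (a * b) := by
    have hcongr : S = choquet μ (fun x => b * ((g x : ℝ≥0∞) * (f x : ℝ≥0∞) ^ p)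
        + a * ((h x : ℝ≥0∞) * (f x : ℝ≥0∞) ^ p)) A := by
      rw [hSdef]
      congr 1
      funext x
      rw [hwdef]
      ring
    rw [hcongr]
    calc choquet μ (fun x => b * ((g x : ℝ≥0∞) * (f x : ℝ≥0∞) ^ p)
        + a * ((h x : ℝ≥0∞) * (f x : ℝ≥0∞) ^ p)) A
        ≤ choquet μ (fun x => b * ((g x : ℝ≥0∞) * (f x : ℝ≥0∞) ^ p)) A
          + choquet μ (fun x => a * ((h x : ℝ≥0∞) * (f x : ℝ≥0∞) ^ p)) A :=
          choquet_add_le μ hμ0 hμmono hsubmod hA hbg_m hah_m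
      _ = b * choquet μ (fun x => (g x : ℝ≥0∞) * (f x : ℝ≥0∞) ^ p) A
          + a * choquet μ (fun x => (h x : ℝ≥0∞) * (f x : ℝ≥0∞) ^ p) A := by
          rw [choquet_smul μ hμmono hA hgfp_m hb0.ne' hbf.ne,
            choquet_smul μ hμmono hA hhfp_m ha0.ne' haf.ne]
      _ = b * a + a * b := by rw [← ha, ← hb]
      _ = 2 * (a * b) := by ring
  have hSge : b * a ≤ S := by
    have h1 : choquet μ (fun x => b * ((g x : ℝ≥0∞) * (f x : ℝ≥0∞) ^ p)) A ≤ S := by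
      rw [hSdef]
      refine choquet_mono μ hμmono hA hbg_m hwfp_m fun x => ?_
      calc b * ((g x : ℝ≥0∞) * (f x : ℝ≥0∞) ^ p)
          = (b * (g x : ℝ≥0∞)) * (f x : ℝ≥0∞) ^ p := by ring
        _ ≤ w x * (f x : ℝ≥0∞) ^ p := mul_le_mul_left le_self_add _
    rw [choquet_smul μ hμmono hA hgfp_m hb0.ne' hbf.ne, ← ha] at h1
    exact h1
  have hS0 : S ≠ 0 := by
    intro hcon
    rw [hcon] at hSge
    exact absurd (le_antisymm hSge (zero_le)) (mul_ne_zero hb0.ne' ha0.ne')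
  have hSf : S ≠ ∞ := ne_top_of_le_ne_top
    (ENNReal.mul_ne_top (by norm_num) (ENNReal.mul_ne_top haf.ne hbf.ne)) hSle
  -- constants are nondegenerate
  have hc20 : (2:ℝ≥0∞) ^ (1/p) ≠ 0 := (ENNReal.rpow_pos (by norm_num) (by norm_num)).ne'
  have hab0 : (a*b) ≠ 0 := mul_ne_zero ha0.ne' hb0.ne'
  have habf : (a*b) ≠ ∞ := ENNReal.mul_ne_top haf.ne hbf.ne
  have habp0 : (a*b) ^ (1/p) ≠ 0 := (ENNReal.rpow_pos (zero_lt_iff.mpr hab0) habf).ne'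
  -- case: the last Choquet integral is infinite
  by_cases hTtop : Tq = ∞
  · rw [hTtop, ENNReal.top_rpow_of_pos h1q0,
      ENNReal.mul_top (mul_ne_zero hc20 habp0)]
    exact le_top
  -- the set where w vanishes must be null
  set Z : Set X := {x | w x = 0} with hZdef
  have hZm : MeasurableSet Z := hwm (measurableSet_singleton 0)
  by_cases hZ0 : μ (A ∩ Z) = 0
  swap
  · exfalso
    refine hTtop ?_
    have hsub : ∀ t : ℝ, A ∩ Z ⊆ A ∩ {x | ENNReal.ofReal t ≤ w x ^ (-(q-1))} := by
      intro t
      refine Set.inter_subset_inter_right A fun x hx => ?_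
      have hwx : w x = 0 := hx
      simp only [Set.mem_setOf_eq, hwx,
        ENNReal.zero_rpow_of_neg (by linarith : -(q-1) < 0)]
      exact le_top
    have hbound : ∀ t : ℝ, μ (A ∩ Z) ≤ μ (A ∩ {x | ENNReal.ofReal t ≤ w x ^ (-(q-1))}) :=
      fun t => hμmono _ _ (hA.inter hZm) (lv_meas hwqm hA t) (hsub t)
    have h1 : (∫⁻ _ in Set.Ioi (0:ℝ), μ (A ∩ Z)) ≤ choquet μ (fun x => w x ^ (-(q-1))) A :=
      lintegral_mono fun t => hbound t
    rw [setLIntegral_const, Real.volume_Ioi, ENNReal.mul_top hZ0] at h1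
    rw [← hTq']
    exact le_antisymm le_top h1
  -- decompose f
  set f₀ : X → ℝ≥0∞ := fun x => if w x = 0 then 0 else (f x : ℝ≥0∞) with hf₀def
  have hf₀m : Measurable f₀ := Measurable.ite hZm measurable_const hfm
  have hle1 : choquet μ (fun x => (f x : ℝ≥0∞)) A ≤ choquet μ f₀ A := by
    set f₁ : X → ℝ≥0∞ := fun x => if w x = 0 then (f x : ℝ≥0∞) else 0 with hf₁def
    have hf₁m : Measurable f₁ := Measurable.ite hZm hfm measurable_const
    have hsum : (fun x => (f x : ℝ≥0∞)) = fun x => f₀ x + f₁ x := by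
      funext x
      by_cases hx : w x = 0 <;> simp [hf₀def, hf₁def, hx]
    have h2 : choquet μ f₁ A = 0 := by
      have hpt : ∀ t ∈ Set.Ioi (0:ℝ), μ (A ∩ {x | ENNReal.ofReal t ≤ f₁ x}) = 0 := by
        intro t ht
        refine le_antisymm (le_trans (hμmono _ _ (lv_meas hf₁m hA t) (hA.inter hZm) ?_)
          (le_of_eq hZ0)) (zero_le)
        refine Set.inter_subset_inter_right A fun x hx => ?_
        by_contra hxZ
        have hx' : f₁ x = 0 := by
          rw [hf₁def]
          exact if_neg (by exact hxZ)
        rw [Set.mem_setOf_eq, hx'] at hx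
        exact absurd (le_antisymm hx (zero_le))
          (ENNReal.ofReal_pos.mpr ht).ne'
      show (∫⁻ t in Set.Ioi (0:ℝ), μ (A ∩ {x | ENNReal.ofReal t ≤ f₁ x})) = 0
      rw [setLIntegral_congr_fun measurableSet_Ioi hpt, lintegral_zero]
    calc choquet μ (fun x => (f x : ℝ≥0∞)) A
        = choquet μ (fun x => f₀ x + f₁ x) A := by rw [← hsum]
      _ ≤ choquet μ f₀ A + choquet μ f₁ A :=
          choquet_add_le μ hμ0 hμmono hsubmod hA hf₀m hf₁m
      _ = choquet μ f₀ A := by rw [h2, add_zero]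
  -- Young's inequality with parameter
  set u : X → ℝ≥0∞ := fun x => w x ^ (1/p) * (f x : ℝ≥0∞) with hudef
  set v : X → ℝ≥0∞ := fun x => w x ^ (-(1/p)) with hvdef
  have hum : Measurable u := (hwm.pow measurable_const).mul hfm
  have hvm : Measurable v := hwm.pow measurable_const
  have hup : ∀ x, u x ^ p = w x * (f x : ℝ≥0∞) ^ p := by
    intro x
    rw [hudef]
    rw [ENNReal.mul_rpow_of_nonneg _ _ hp0.le, ← ENNReal.rpow_mul,
      one_div_mul_cancel hp0.ne', ENNReal.rpow_one]
  have hvq : ∀ x, v x ^ q = w x ^ (-(q-1)) := by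
    intro x
    rw [hvdef, ← ENNReal.rpow_mul, hqexp]
  have hyoung : ∀ L : ℝ≥0∞, L ≠ 0 → L ≠ ∞ →
      choquet μ f₀ A ≤ L ^ p / ENNReal.ofReal p * S
        + (L ^ q * ENNReal.ofReal q)⁻¹ * Tq := by
    intro L hL0 hLf
    have hLp0 : L ^ p ≠ 0 := (ENNReal.rpow_pos (zero_lt_iff.mpr hL0) hLf).ne'
    have hLpf : L ^ p ≠ ∞ := ENNReal.rpow_ne_top_of_nonneg hp0.le hLf
    have hLq0 : L ^ q ≠ 0 := (ENNReal.rpow_pos (zero_lt_iff.mpr hL0) hLf).ne'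
    have hLqf : L ^ q ≠ ∞ := ENNReal.rpow_ne_top_of_nonneg hq0.le hLf
    have hptw : ∀ x, f₀ x ≤ (L * u x) * (L⁻¹ * v x) := by
      intro x
      by_cases hx : w x = 0
      · rw [hf₀def]
        simp only [hx, if_pos]
        exact zero_le
      · have huv : u x * v x = (f x : ℝ≥0∞) := by
          rw [hudef, hvdef]
          calc w x ^ (1/p) * (f x : ℝ≥0∞) * w x ^ (-(1/p))
              = (w x ^ (1/p) * w x ^ (-(1/p))) * (f x : ℝ≥0∞) := by ring
            _ = w x ^ (1/p + -(1/p)) * (f x : ℝ≥0∞) := by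
                rw [← ENNReal.rpow_add _ _ hx (hwfin x)]
            _ = (f x : ℝ≥0∞) := by
                rw [add_neg_cancel, ENNReal.rpow_zero, one_mul]
        refine le_of_eq ?_
        calc f₀ x = (f x : ℝ≥0∞) := by rw [hf₀def]; simp [hx]
          _ = (L * L⁻¹) * (u x * v x) := by
              rw [huv, ENNReal.mul_inv_cancel hL0 hLf, one_mul]
          _ = (L * u x) * (L⁻¹ * v x) := by ring
    have hy : ∀ x, (L * u x) * (L⁻¹ * v x)
        ≤ (L * u x) ^ p / ENNReal.ofReal p + (L⁻¹ * v x) ^ q / ENNReal.ofReal q :=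
      fun x => ENNReal.young_inequality _ _ hconj
    have hm1 : Measurable fun x => (L * u x) ^ p / ENNReal.ofReal p :=
      ((measurable_const.mul hum).pow measurable_const).div measurable_const
    have hm2 : Measurable fun x => (L⁻¹ * v x) ^ q / ENNReal.ofReal q :=
      ((measurable_const.mul hvm).pow measurable_const).div measurable_const
    have hmain := choquet_mono μ hμmono hA hf₀m (hm1.add hm2)
      (fun x => le_trans (hptw x) (hy x))
    refine le_trans hmain ?_
    refine le_trans (choquet_add_le μ hμ0 hμmono hsubmod hA hm1 hm2) ?_
    have he1 : (fun x => (L * u x) ^ p / ENNReal.ofReal p)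
        = fun x => (L ^ p / ENNReal.ofReal p) * (w x * (f x : ℝ≥0∞) ^ p) := by
      funext x
      rw [ENNReal.mul_rpow_of_nonneg _ _ hp0.le, hup x, div_eq_mul_inv, div_eq_mul_inv]
      ring
    have he2 : (fun x => (L⁻¹ * v x) ^ q / ENNReal.ofReal q)
        = fun x => ((L ^ q * ENNReal.ofReal q)⁻¹) * (w x ^ (-(q-1))) := by
      funext x
      rw [ENNReal.mul_rpow_of_nonneg _ _ hq0.le, hvq x, ENNReal.inv_rpow,
        div_eq_mul_inv, ENNReal.mul_inv (Or.inl hLq0) (Or.inl hLqf)]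
      ring
    have hcc1 : L ^ p / ENNReal.ofReal p ≠ 0 := by
      rw [div_eq_mul_inv]
      exact mul_ne_zero hLp0 (ENNReal.inv_ne_zero.mpr ENNReal.ofReal_ne_top)
    have hcc1f : L ^ p / ENNReal.ofReal p ≠ ∞ := by
      rw [div_eq_mul_inv]
      exact ENNReal.mul_ne_top hLpf (ENNReal.inv_ne_top.mpr (by simp [hp0]))
    have hcc2 : (L ^ q * ENNReal.ofReal q)⁻¹ ≠ 0 :=
      ENNReal.inv_ne_zero.mpr (ENNReal.mul_ne_top hLqf ENNReal.ofReal_ne_top)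
    have hcc2f : (L ^ q * ENNReal.ofReal q)⁻¹ ≠ ∞ :=
      ENNReal.inv_ne_top.mpr (mul_ne_zero hLq0 (by simp [hq0]))
    rw [he1, he2, choquet_smul μ hμmono hA hwfp_m hcc1 hcc1f,
      choquet_smul μ hμmono hA hwqm hcc2 hcc2f, hTq']
  -- optimize over L
  have hopt : choquet μ f₀ A ≤ S ^ (1/p) * Tq ^ (1/q) :=
    ennreal_young_opt hp hpq hS0 hSf hTtop hyoung
  calc choquet μ (fun x => (f x : ℝ≥0∞)) A
      ≤ S ^ (1/p) * Tq ^ (1/q) := le_trans hle1 hopt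
    _ ≤ (2 * (a * b)) ^ (1/p) * Tq ^ (1/q) :=
        mul_le_mul_left (ENNReal.rpow_le_rpow hSle h1p0.le) _
    _ = (2:ℝ≥0∞) ^ (1/p) * (a * b) ^ (1/p) * Tq ^ (1/q) := by
        rw [ENNReal.mul_rpow_of_nonneg _ _ h1p0.le]
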